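/- arXiv:2605.30979 — 3 statements merged into one kernel-verified Lean document; each statement's English description precedes it below -/
import Mathlib

section
/- Let μ be a probability measure on ℝ² with Gaussian copula C_Σ where Σ has off-diagonal entry ℓ ∈ (−1,1), and marginals with cdf F_i(x) = Φ(sinh(x) + εx), ε > 0, where Φ is the standard normal cdf. Then each marginal density ρ_i = (cosh(x)+ε)φ(sinh(x)+εx) has potential V_i = −log ρ_i with V_i''(x) ≥ 2ε + ε² for all x ∈ ℝ. -/
open Real

/-- For the marginal density `ρ(x) = (cosh x + ε) φ(sinh x + εx)` (where `φ` is the standard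
normal density), the potential `V = −log ρ` satisfies `V''(x) ≥ 2ε + ε²` for all `x ∈ ℝ`;
i.e. the marginal is uniformly log-concave. -/
theorem stmt_16 (ε : ℝ) (hε : 0 < ε)
    (ρ : ℝ → ℝ)
    (hρ : ρ = fun x => (Real.cosh x + ε) *
      ((Real.sqrt (2 * π))⁻¹ * Real.exp (-(Real.sinh x + ε * x) ^ 2 / 2)))
    (V : ℝ → ℝ) (hV : V = fun x => -Real.log (ρ x)) :
    ∀ x : ℝ, 2 * ε + ε ^ 2 ≤ deriv (deriv V) x := by
  have hcpos : ∀ x : ℝ, (0:ℝ) < Real.cosh x + ε := fun x =>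
    add_pos (Real.cosh_pos x) hε
  have hsqpos : (0:ℝ) < Real.sqrt (2 * π) :=
    Real.sqrt_pos.mpr (by positivity)
  -- Rewrite V in a convenient form
  have hVW : V = fun x => (Real.sinh x + ε * x) ^ 2 / 2
      - Real.log (Real.cosh x + ε) + Real.log (Real.sqrt (2 * π)) := by
    funext x
    rw [hV, hρ]
    simp only
    rw [Real.log_mul (ne_of_gt (hcpos x)) (by positivity),
        Real.log_mul (by positivity) (Real.exp_ne_zero _),
        Real.log_exp, Real.log_inv]
    ring
  -- First derivative
  have hd1 : ∀ x : ℝ, HasDerivAt V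
      ((Real.sinh x + ε * x) * (Real.cosh x + ε) - Real.sinh x / (Real.cosh x + ε)) x := by
    intro x
    rw [hVW]
    have h1 : HasDerivAt (fun x : ℝ => Real.sinh x + ε * x) (Real.cosh x + ε) x := by
      have := (Real.hasDerivAt_sinh x).add ((hasDerivAt_id x).const_mul ε)
      exact this.congr_deriv (by ring)
    have h2 : HasDerivAt (fun x : ℝ => (Real.sinh x + ε * x) ^ 2 / 2)
        (2 * (Real.sinh x + ε * x) ^ 1 * (Real.cosh x + ε) / 2) x :=
      (h1.pow 2).div_const 2
    have h3 : HasDerivAt (fun x : ℝ => Real.log (Real.cosh x + ε))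
        (Real.sinh x / (Real.cosh x + ε)) x :=
      ((Real.hasDerivAt_cosh x).add_const ε).log (ne_of_gt (hcpos x))
    have := (h2.sub h3).add_const (Real.log (Real.sqrt (2 * π)))
    refine this.congr_deriv ?_
    ring
  have hdV : deriv V = fun x =>
      (Real.sinh x + ε * x) * (Real.cosh x + ε) - Real.sinh x / (Real.cosh x + ε) := by
    funext x; exact (hd1 x).deriv
  intro x
  set c := Real.cosh x with hc
  set s := Real.sinh x with hs
  -- Second derivative at x
  have hd2 : HasDerivAt (deriv V)
      ((c + ε) * (c + ε) + (s + ε * x) * s - (c * (c + ε) - s * s) / (c + ε) ^ 2) x := by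
    rw [hdV]
    have h1 : HasDerivAt (fun x : ℝ => Real.sinh x + ε * x) (c + ε) x := by
      have := (Real.hasDerivAt_sinh x).add ((hasDerivAt_id x).const_mul ε)
      exact this.congr_deriv (by ring)
    have h2 : HasDerivAt (fun x : ℝ => Real.cosh x + ε) s x :=
      (Real.hasDerivAt_cosh x).add_const ε
    have h3 : HasDerivAt (fun x : ℝ => (Real.sinh x + ε * x) * (Real.cosh x + ε))
        ((c + ε) * (c + ε) + (s + ε * x) * s) x := h1.mul h2
    have h4 : HasDerivAt (fun x : ℝ => Real.sinh x / (Real.cosh x + ε))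
        ((c * (c + ε) - s * s) / (c + ε) ^ 2) x :=
      (Real.hasDerivAt_sinh x).div h2 (ne_of_gt (hcpos x))
    exact h3.sub h4
  rw [hd2.deriv]
  -- Now the inequality
  have hc1 : (1:ℝ) ≤ c := Real.one_le_cosh x
  have hid : c ^ 2 - s ^ 2 = 1 := Real.cosh_sq_sub_sinh_sq x
  have hxs : 0 ≤ x * s := by
    rcases le_or_gt 0 x with hx | hx
    · exact mul_nonneg hx (by rw [hs]; exact Real.sinh_nonneg_iff.mpr hx)
    · have : s ≤ 0 := by rw [hs]; exact (Real.sinh_neg_iff.mpr hx).le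
      nlinarith
  have hpos : (0:ℝ) < c + ε := hcpos x
  have hA : (c * (c + ε) - s * s) / (c + ε) ^ 2 ≤ 1 := by
    rw [div_le_one (by positivity)]
    nlinarith
  nlinarith [sq_nonneg s, sq_nonneg (c - 1)]
end

section
/- With h_ε(x) = sinh(x) + εx, ℓ ∈ (−1,1)\{0}, and V(x₁,x₂) the potential of the density ρ(x) = (2π√(1−ℓ²))⁻¹ h_ε'(x₁)h_ε'(x₂) exp(−(h_ε(x₁)² + h_ε(x₂)² − 2ℓ h_ε(x₁)h_ε(x₂))/(2(1−ℓ²))), the determinant of the Hessian of V = −log ρ at the origin equals ((1/(1−ℓ²) − 1/(1+ε)³)² − (ℓ/(1−ℓ²))²)(1+ε)⁴, which is strictly negative whenever (1+ε)³ < 1 + |ℓ|; hence ρ is not log-concave for such ε. -/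
open Real

/- auxiliary definitions -/
noncomputable def phiF (ε c : ℝ) : ℝ → ℝ :=
  fun t => -Real.log (Real.cosh t + ε) + c * (Real.sinh t + ε * t) ^ 2

noncomputable def phiD (ε c : ℝ) : ℝ → ℝ :=
  fun t => -(Real.sinh t / (Real.cosh t + ε)) +
    c * (2 * (Real.sinh t + ε * t) * (Real.cosh t + ε))

noncomputable def hFa (ε : ℝ) : ℝ → ℝ := fun t => Real.sinh t + ε * t
noncomputable def hDa (ε : ℝ) : ℝ → ℝ := fun t => Real.cosh t + ε

lemma dhFa (ε t : ℝ) : HasDerivAt (hFa ε) (hDa ε t) t := by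
  unfold hFa hDa
  simpa [hFa, hDa] using (Real.hasDerivAt_sinh t).fun_add ((hasDerivAt_id t).const_mul ε)

lemma dhDa0 (ε : ℝ) : HasDerivAt (hDa ε) 0 0 := by
  unfold hDa
  simpa [hDa] using (Real.hasDerivAt_cosh 0).add_const ε

lemma dphi (ε : ℝ) (hε : 0 < ε) (c t : ℝ) :
    HasDerivAt (phiF ε c) (phiD ε c t) t := by
  have hpos : 0 < Real.cosh t + ε := by positivity
  have hlog : HasDerivAt (fun t => Real.log (Real.cosh t + ε))
      (Real.sinh t / (Real.cosh t + ε)) t := by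
    have hc : HasDerivAt (fun t => Real.cosh t + ε) (Real.sinh t) t := by
      simpa using (Real.hasDerivAt_cosh t).add_const ε
    simpa [div_eq_inv_mul, Function.comp_def] using (Real.hasDerivAt_log hpos.ne').comp t hc
  have hsq : HasDerivAt (fun t => (Real.sinh t + ε * t) ^ 2)
      (2 * (Real.sinh t + ε * t) * (Real.cosh t + ε)) t := by
    have := ((Real.hasDerivAt_sinh t).fun_add ((hasDerivAt_id t).const_mul ε)).fun_pow 2
    refine this.congr_deriv ?_
    simp only [id_eq]
    ring
  exact hlog.neg.add (hsq.const_mul c)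

lemma dphi' (ε : ℝ) (hε : 0 < ε) (c : ℝ) :
    HasDerivAt (phiD ε c) (-(1 / (1 + ε)) + c * (2 * (1 + ε) ^ 2)) 0 := by
  have hpos : 0 < Real.cosh 0 + ε := by positivity
  have hc : HasDerivAt (fun t => Real.cosh t + ε) (Real.sinh 0) 0 := by
    simpa using (Real.hasDerivAt_cosh 0).add_const ε
  have hq : HasDerivAt (fun t => Real.sinh t / (Real.cosh t + ε))
      ((Real.cosh 0 * (Real.cosh 0 + ε) - Real.sinh 0 * Real.sinh 0) / (Real.cosh 0 + ε) ^ 2)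
      0 := (Real.hasDerivAt_sinh 0).div hc hpos.ne'
  have hp : HasDerivAt (fun t => 2 * (Real.sinh t + ε * t) * (Real.cosh t + ε))
      (2 * (1 + ε) * (Real.cosh 0 + ε) + 2 * (Real.sinh 0 + ε * 0) * Real.sinh 0) 0 := by
    have h1 : HasDerivAt (fun t => 2 * (Real.sinh t + ε * t)) (2 * (1 + ε)) 0 := by
      simpa using ((Real.hasDerivAt_sinh 0).add ((hasDerivAt_id 0).const_mul ε)).const_mul 2
    exact h1.mul hc
  have := hq.neg.add (hp.const_mul c)
  refine this.congr_deriv ?_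
  rw [Real.cosh_zero, Real.sinh_zero]
  have : (1:ℝ) + ε ≠ 0 := by positivity
  field_simp
  ring

lemma auxFD (K m : ℝ) (α β γ δ : ℝ → ℝ) (a b c d : ℝ) (p : Fin 2 → ℝ)
    (hα : HasDerivAt α a (p 0)) (hβ : HasDerivAt β b (p 1))
    (hγ : HasDerivAt γ c (p 0)) (hδ : HasDerivAt δ d (p 1)) :
    HasFDerivAt (fun x : Fin 2 → ℝ => K + α (x 0) + β (x 1) + m * (γ (x 0) * δ (x 1)))
      ((a + m * (c * δ (p 1))) • (ContinuousLinearMap.proj 0 : (Fin 2 → ℝ) →L[ℝ] ℝ)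
       + (b + m * (γ (p 0) * d)) • (ContinuousLinearMap.proj 1 : (Fin 2 → ℝ) →L[ℝ] ℝ)) p := by
  have pr0 := (ContinuousLinearMap.proj (R := ℝ) (φ := fun _ : Fin 2 => ℝ) 0).hasFDerivAt (x := p)
  have pr1 := (ContinuousLinearMap.proj (R := ℝ) (φ := fun _ : Fin 2 => ℝ) 1).hasFDerivAt (x := p)
  have h1 : HasFDerivAt (fun x : Fin 2 → ℝ => α (x 0))
      (a • (ContinuousLinearMap.proj 0 : (Fin 2 → ℝ) →L[ℝ] ℝ)) p :=
    hα.comp_hasFDerivAt p pr0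
  have h2 : HasFDerivAt (fun x : Fin 2 → ℝ => β (x 1))
      (b • (ContinuousLinearMap.proj 1 : (Fin 2 → ℝ) →L[ℝ] ℝ)) p :=
    hβ.comp_hasFDerivAt p pr1
  have h3 : HasFDerivAt (fun x : Fin 2 → ℝ => γ (x 0))
      (c • (ContinuousLinearMap.proj 0 : (Fin 2 → ℝ) →L[ℝ] ℝ)) p :=
    hγ.comp_hasFDerivAt p pr0
  have h4 : HasFDerivAt (fun x : Fin 2 → ℝ => δ (x 1))
      (d • (ContinuousLinearMap.proj 1 : (Fin 2 → ℝ) →L[ℝ] ℝ)) p :=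
    hδ.comp_hasFDerivAt p pr1
  have hmul := (h3.mul h4).const_mul m
  have := (((hasFDerivAt_const K p).add h1).add h2).add hmul
  refine this.congr_fderiv ?_
  ext v
  simp [ContinuousLinearMap.proj]
  ring

lemma auxPD (K m : ℝ) (α β γ δ : ℝ → ℝ) (a b c d : ℝ) (p : Fin 2 → ℝ)
    (hα : HasDerivAt α a (p 0)) (hβ : HasDerivAt β b (p 1))
    (hγ : HasDerivAt γ c (p 0)) (hδ : HasDerivAt δ d (p 1)) :
    fderiv ℝ (fun x : Fin 2 → ℝ => K + α (x 0) + β (x 1) + m * (γ (x 0) * δ (x 1))) p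
      (Pi.single 0 1) = a + m * (c * δ (p 1)) ∧
    fderiv ℝ (fun x : Fin 2 → ℝ => K + α (x 0) + β (x 1) + m * (γ (x 0) * δ (x 1))) p
      (Pi.single 1 1) = b + m * (γ (p 0) * d) := by
  rw [(auxFD K m α β γ δ a b c d p hα hβ hγ hδ).fderiv]
  constructor <;> simp [ContinuousLinearMap.proj, Pi.single_apply]

lemma not_convex_of_neg_second (f f' : ℝ → ℝ) (hf : ∀ t, HasDerivAt f (f' t) t)
    (S : ℝ) (hS : HasDerivAt f' S 0) (hSneg : S < 0) :
    ¬ ConvexOn ℝ Set.univ f := by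
  intro hc
  have hmono : Monotone f' := by
    intro x y hxy
    rcases eq_or_lt_of_le hxy with rfl | hlt
    · exact le_refl _
    calc f' x ≤ slope f x y :=
          hc.le_slope_of_hasDerivAt (Set.mem_univ x) (Set.mem_univ y) hlt (hf x)
      _ ≤ f' y := hc.slope_le_of_hasDerivAt (Set.mem_univ x) (Set.mem_univ y) hlt (hf y)
  have htend : Filter.Tendsto (slope f' 0) (nhdsWithin 0 {(0:ℝ)}ᶜ) (nhds S) :=
    hasDerivAt_iff_tendsto_slope.mp hS
  have hge : (0:ℝ) ≤ S := by
    refine ge_of_tendsto htend ?_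
    refine Filter.eventually_of_mem self_mem_nhdsWithin (fun t ht => ?_)
    have ht0 : t ≠ 0 := ht
    rw [slope_def_field]
    rcases lt_or_gt_of_ne ht0 with h | h
    · have h2 := hmono h.le
      have h3 : f' t - f' 0 ≤ 0 := by linarith
      have : 0 ≤ (f' t - f' 0) / (t - 0) := div_nonneg_of_nonpos h3 (by linarith)
      simpa using this
    · have h2 := hmono h.le
      have h1 : 0 ≤ f' t - f' 0 := by linarith
      have : 0 ≤ (f' t - f' 0) / (t - 0) := div_nonneg h1 (by linarith)
      simpa using this
  linarith

set_option maxHeartbeats 1000000 in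
/-- With `h_ε(x) = sinh x + εx` and `ℓ ∈ (−1,1) \ {0}`, the potential `V = −log ρ` of the
two-dimensional density with Gaussian copula and marginals `Φ ∘ h_ε` has Hessian determinant
at the origin equal to `((1/(1−ℓ²) − 1/(1+ε)³)² − (ℓ/(1−ℓ²))²)(1+ε)⁴`; this is strictly
negative whenever `(1+ε)³ < 1 + |ℓ|`, hence `V` is not convex and `ρ` is not log-concave. -/
theorem stmt_17 (ε ℓ : ℝ) (hε : 0 < ε) (hℓ : ℓ ∈ Set.Ioo (-1 : ℝ) 1) (hℓ0 : ℓ ≠ 0)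
    (h : ℝ → ℝ) (hh : h = fun x => Real.sinh x + ε * x)
    (ρ : (Fin 2 → ℝ) → ℝ)
    (hρ : ρ = fun x => (2 * π * Real.sqrt (1 - ℓ ^ 2))⁻¹ *
      (Real.cosh (x 0) + ε) * (Real.cosh (x 1) + ε) *
      Real.exp (-((h (x 0)) ^ 2 + (h (x 1)) ^ 2 - 2 * ℓ * h (x 0) * h (x 1)) /
        (2 * (1 - ℓ ^ 2))))
    (V : (Fin 2 → ℝ) → ℝ) (hV : V = fun x => -Real.log (ρ x))
    -- the Hessian matrix of V at the origin
    (H : Matrix (Fin 2) (Fin 2) ℝ)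
    (hH : H = Matrix.of fun i j =>
      fderiv ℝ (fun x => fderiv ℝ V x (Pi.single j 1)) 0 (Pi.single i 1)) :
    H.det = ((1 / (1 - ℓ ^ 2) - 1 / (1 + ε) ^ 3) ^ 2 - (ℓ / (1 - ℓ ^ 2)) ^ 2) *
      (1 + ε) ^ 4 ∧
    ((1 + ε) ^ 3 < 1 + |ℓ| → H.det < 0 ∧ ¬ ConvexOn ℝ Set.univ V) := by
  obtain ⟨hℓ1, hℓ2⟩ := hℓ
  have h2l : (0:ℝ) < 1 - ℓ ^ 2 := by nlinarith
  have he1 : (0:ℝ) < 1 + ε := by linarith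
  have h2l' : (1:ℝ) - ℓ ^ 2 ≠ 0 := h2l.ne'
  have h1e : (1:ℝ) + ε ≠ 0 := he1.ne'
  obtain ⟨c, hc⟩ : ∃ c : ℝ, c = 1 / (2 * (1 - ℓ ^ 2)) := ⟨_, rfl⟩
  obtain ⟨m, hm⟩ : ∃ m : ℝ, m = -(ℓ / (1 - ℓ ^ 2)) := ⟨_, rfl⟩
  obtain ⟨K, hK⟩ : ∃ K : ℝ, K = Real.log (2 * π * Real.sqrt (1 - ℓ ^ 2)) := ⟨_, rfl⟩
  -- rewrite V in separable form
  have hqd : ∀ u w : ℝ, -(-(u ^ 2 + w ^ 2 - 2 * ℓ * u * w) / (2 * (1 - ℓ ^ 2)))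
      = c * u ^ 2 + c * w ^ 2 + m * (u * w) := by
    intro u w
    rw [hc, hm]
    field_simp
    ring
  have hVeq : V = fun x : Fin 2 → ℝ =>
      K + phiF ε c (x 0) + phiF ε c (x 1) + m * (hFa ε (x 0) * hFa ε (x 1)) := by
    funext x
    rw [hV, hρ, hh]
    have hA : (0:ℝ) < 2 * π * Real.sqrt (1 - ℓ ^ 2) := by
      have := Real.pi_pos
      have := Real.sqrt_pos.mpr h2l
      positivity
    have hc0 : (0:ℝ) < Real.cosh (x 0) + ε := by positivity
    have hc1 : (0:ℝ) < Real.cosh (x 1) + ε := by positivity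
    simp only
    rw [Real.log_mul (by positivity) (Real.exp_ne_zero _),
        Real.log_mul (by positivity) hc1.ne',
        Real.log_mul (by positivity) hc0.ne',
        Real.log_exp, Real.log_inv]
    simp only [phiF, hFa, hK]
    linear_combination hqd (Real.sinh (x 0) + ε * x 0) (Real.sinh (x 1) + ε * x 1)
  -- first partial derivatives
  have hPD0 : ∀ p : Fin 2 → ℝ, fderiv ℝ V p (Pi.single 0 1)
      = phiD ε c (p 0) + m * (hDa ε (p 0) * hFa ε (p 1)) := fun p => by
    rw [hVeq]
    exact (auxPD K m (phiF ε c) (phiF ε c) (hFa ε) (hFa ε)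
      (phiD ε c (p 0)) (phiD ε c (p 1)) (hDa ε (p 0)) (hDa ε (p 1)) p
      (dphi ε hε c _) (dphi ε hε c _) (dhFa ε _) (dhFa ε _)).1
  have hPD1 : ∀ p : Fin 2 → ℝ, fderiv ℝ V p (Pi.single 1 1)
      = phiD ε c (p 1) + m * (hFa ε (p 0) * hDa ε (p 1)) := fun p => by
    rw [hVeq]
    exact (auxPD K m (phiF ε c) (phiF ε c) (hFa ε) (hFa ε)
      (phiD ε c (p 0)) (phiD ε c (p 1)) (hDa ε (p 0)) (hDa ε (p 1)) p
      (dphi ε hε c _) (dphi ε hε c _) (dhFa ε _) (dhFa ε _)).2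
  obtain ⟨A2, hA2⟩ : ∃ A2 : ℝ, A2 = -(1 / (1 + ε)) + c * (2 * (1 + ε) ^ 2) := ⟨_, rfl⟩
  obtain ⟨B, hB⟩ : ∃ B : ℝ, B = m * ((1 + ε) * (1 + ε)) := ⟨_, rfl⟩
  -- value facts at 0
  have hF0 : hFa ε 0 = 0 := by simp [hFa]
  have hD0 : hDa ε 0 = 1 + ε := by simp [hDa]
  have hdF0 : HasDerivAt (hFa ε) (1 + ε) 0 := by
    have := dhFa ε 0
    rwa [hD0] at this
  have hphiD0 : HasDerivAt (phiD ε c) A2 0 := by rw [hA2]; exact dphi' ε hε c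
  -- second derivatives
  have e0 : (fun x : Fin 2 → ℝ => fderiv ℝ V x (Pi.single 0 1))
      = fun x : Fin 2 → ℝ => (0:ℝ) + phiD ε c (x 0) + (0:ℝ) + m * (hDa ε (x 0) * hFa ε (x 1)) := by
    funext p; rw [hPD0 p]; ring
  have e1 : (fun x : Fin 2 → ℝ => fderiv ℝ V x (Pi.single 1 1))
      = fun x : Fin 2 → ℝ => (0:ℝ) + (0:ℝ) + phiD ε c (x 1) + m * (hFa ε (x 0) * hDa ε (x 1)) := by
    funext p; rw [hPD1 p]; ring
  have key0 := auxPD (0:ℝ) m (phiD ε c) (fun _ => (0:ℝ)) (hDa ε) (hFa ε)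
      A2 0 0 (1 + ε) (0 : Fin 2 → ℝ)
      hphiD0 (hasDerivAt_const _ _) (dhDa0 ε) hdF0
  have key1 := auxPD (0:ℝ) m (fun _ => (0:ℝ)) (phiD ε c) (hFa ε) (hDa ε)
      0 A2 (1 + ε) 0 (0 : Fin 2 → ℝ)
      (hasDerivAt_const _ _) hphiD0 hdF0 (dhDa0 ε)
  have hH00 : H 0 0 = A2 := by
    rw [hH]
    show fderiv ℝ (fun x => fderiv ℝ V x (Pi.single 0 1)) 0 (Pi.single 0 1) = A2
    rw [e0, key0.1]
    simp only [Pi.zero_apply, hF0]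
    ring
  have hH10 : H 1 0 = B := by
    rw [hH]
    show fderiv ℝ (fun x => fderiv ℝ V x (Pi.single 0 1)) 0 (Pi.single 1 1) = B
    rw [e0, key0.2]
    simp only [Pi.zero_apply, hD0]
    rw [hB]; ring
  have hH01 : H 0 1 = B := by
    rw [hH]
    show fderiv ℝ (fun x => fderiv ℝ V x (Pi.single 1 1)) 0 (Pi.single 0 1) = B
    rw [e1, key1.1]
    simp only [Pi.zero_apply, hD0]
    rw [hB]; ring
  have hH11 : H 1 1 = A2 := by
    rw [hH]
    show fderiv ℝ (fun x => fderiv ℝ V x (Pi.single 1 1)) 0 (Pi.single 1 1) = A2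
    rw [e1, key1.2]
    simp only [Pi.zero_apply, hF0]
    ring
  have hdet : H.det = A2 * A2 - B * B := by
    rw [Matrix.det_fin_two, hH00, hH01, hH10, hH11]
  clear key0 key1 e0 e1 hPD0 hPD1 hH00 hH01 hH10 hH11 hH hρ
  have hdetval : H.det = ((1 / (1 - ℓ ^ 2) - 1 / (1 + ε) ^ 3) ^ 2 - (ℓ / (1 - ℓ ^ 2)) ^ 2) *
      (1 + ε) ^ 4 := by
    rw [hdet, hA2, hB, hm, hc]
    field_simp
    ring
  refine ⟨hdetval, fun hlt => ?_⟩
  -- negativity of the determinant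
  have habs1 : |ℓ| < 1 := abs_lt.mpr ⟨hℓ1, hℓ2⟩
  have habs0 : 0 < |ℓ| := abs_pos.mpr hℓ0
  have hfact : 1 - ℓ ^ 2 = (1 - |ℓ|) * (1 + |ℓ|) := by rw [← sq_abs]; ring
  have he3 : (0:ℝ) < (1 + ε) ^ 3 := by positivity
  have hd1 : (0:ℝ) < 1 - |ℓ| := by linarith
  have hd2 : (0:ℝ) < 1 + |ℓ| := by linarith
  have hXpos : 0 < 1 / (1 - ℓ ^ 2) - 1 / (1 + ε) ^ 3 := by
    have h1 : 1 / (1 + ε) ^ 3 < 1 := by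
      rw [div_lt_one he3]; nlinarith
    have h2 : (1:ℝ) ≤ 1 / (1 - ℓ ^ 2) := by
      rw [le_div_iff₀ h2l]; nlinarith
    linarith
  have hZpos : 0 < |ℓ| / (1 - ℓ ^ 2) := by positivity
  have hXZ : 1 / (1 - ℓ ^ 2) - 1 / (1 + ε) ^ 3 - |ℓ| / (1 - ℓ ^ 2) < 0 := by
    have h14 : 1 / (1 - ℓ ^ 2) - |ℓ| / (1 - ℓ ^ 2) = 1 / (1 + |ℓ|) := by
      rw [hfact]
      field_simp
    have h15 : 1 / (1 + |ℓ|) < 1 / (1 + ε) ^ 3 :=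
      one_div_lt_one_div_of_lt he3 hlt
    linarith
  have hdetneg : H.det < 0 := by
    rw [hdetval]
    have hYZ : (ℓ / (1 - ℓ ^ 2)) ^ 2 = (|ℓ| / (1 - ℓ ^ 2)) ^ 2 := by
      rw [div_pow, div_pow, sq_abs]
    rw [hYZ]
    have hprod : ((1 / (1 - ℓ ^ 2) - 1 / (1 + ε) ^ 3) ^ 2 - (|ℓ| / (1 - ℓ ^ 2)) ^ 2) < 0 := by
      nlinarith
    have h4 : (0:ℝ) < (1 + ε) ^ 4 := by positivity
    exact mul_neg_of_neg_of_pos hprod h4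
  refine ⟨hdetneg, ?_⟩
  -- non-convexity
  have hABlt : A2 * A2 - B * B < 0 := by rw [← hdet]; exact hdetneg
  have hAabsB : A2 < |B| := by nlinarith [le_abs_self A2, abs_nonneg B, sq_abs B, sq_abs A2]
  obtain ⟨s, hs⟩ : ∃ s : ℝ, s = if 0 ≤ ℓ then (1:ℝ) else -1 := ⟨_, rfl⟩
  have hs2 : s * s = 1 := by rw [hs]; split <;> norm_num
  have hsB : s * B = -|B| := by
    rcases le_or_gt 0 ℓ with hl | hl
    · have hl' : 0 < ℓ := lt_of_le_of_ne hl (Ne.symm hℓ0)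
      have hBneg : B < 0 := by
        rw [hB, hm]
        have : 0 < ℓ / (1 - ℓ ^ 2) := by positivity
        nlinarith
      rw [hs, if_pos hl, abs_of_neg hBneg]; ring
    · have hBpos : 0 < B := by
        rw [hB, hm]
        have h5 : 0 < (-ℓ) / (1 - ℓ ^ 2) := div_pos (by linarith) h2l
        have h6 : -(ℓ / (1 - ℓ ^ 2)) = (-ℓ) / (1 - ℓ ^ 2) := by ring
        nlinarith
      rw [hs, if_neg (not_le.mpr hl), abs_of_pos hBpos]; ring
  intro hcv
  -- restrict V to the line t ↦ t • v
  obtain ⟨v, hv⟩ : ∃ v : Fin 2 → ℝ, v = fun i => if i = 0 then (1:ℝ) else s := ⟨_, rfl⟩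
  obtain ⟨f, hf⟩ : ∃ f : ℝ → ℝ, f = fun t => V (t • v) := ⟨_, rfl⟩
  have hfe : f = fun t => K + phiF ε c t + phiF ε c (t * s) + m * (hFa ε t * hFa ε (t * s)) := by
    funext t
    rw [hf, hVeq, hv]
    simp
  obtain ⟨F', hF'⟩ : ∃ F' : ℝ → ℝ, F' = fun t => phiD ε c t + phiD ε c (t * s) * s +
      m * ((hDa ε t * hFa ε (t * s)) + hFa ε t * (hDa ε (t * s) * s)) := ⟨_, rfl⟩
  have hts : ∀ t : ℝ, HasDerivAt (fun t : ℝ => t * s) s t := fun t => by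
    simpa using (hasDerivAt_id t).mul_const s
  have hdf : ∀ t, HasDerivAt f (F' t) t := by
    intro t
    rw [hfe, hF']
    have h1 : HasDerivAt (fun t => phiF ε c (t * s)) (phiD ε c (t * s) * s) t :=
      by have := (dphi ε hε c (t * s)).comp t (hts t); exact this
    have h2 : HasDerivAt (fun t => hFa ε (t * s)) (hDa ε (t * s) * s) t :=
      by have := (dhFa ε (t * s)).comp t (hts t); exact this
    have h3 : HasDerivAt (fun t => hFa ε t * hFa ε (t * s))
        (hDa ε t * hFa ε (t * s) + hFa ε t * (hDa ε (t * s) * s)) t :=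
      (dhFa ε t).mul h2
    simpa using (((hasDerivAt_const t K).fun_add (dphi ε hε c t)).fun_add h1).fun_add (h3.const_mul m)
  have hz : (0:ℝ) * s = 0 := zero_mul s
  have hS : HasDerivAt F' (A2 + A2 * (s * s) + m * (((1 + ε) * (1 + ε)) * s
      + ((1 + ε) * (1 + ε)) * s)) 0 := by
    rw [hF']
    have h1a : HasDerivAt (phiD ε c) A2 ((0:ℝ) * s) := by rw [hz]; exact hphiD0
    have h1 : HasDerivAt (fun t => phiD ε c (t * s)) (A2 * s) 0 := by have := h1a.comp 0 (hts 0); exact this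
    have h1' : HasDerivAt (fun t => phiD ε c (t * s) * s) (A2 * s * s) 0 := h1.mul_const s
    have h2a : HasDerivAt (hFa ε) (1 + ε) ((0:ℝ) * s) := by rw [hz]; exact hdF0
    have h2 : HasDerivAt (fun t => hFa ε (t * s)) ((1 + ε) * s) 0 := by have := h2a.comp 0 (hts 0); exact this
    have h2Da : HasDerivAt (hDa ε) 0 ((0:ℝ) * s) := by rw [hz]; exact dhDa0 ε
    have h2D : HasDerivAt (fun t => hDa ε (t * s)) (0 * s) 0 := by have := h2Da.comp 0 (hts 0); exact this
    have h3 : HasDerivAt (fun t => hDa ε t * hFa ε (t * s))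
        (0 * hFa ε ((0:ℝ) * s) + hDa ε 0 * ((1 + ε) * s)) 0 :=
      (dhDa0 ε).mul h2
    have h4 : HasDerivAt (fun t => hDa ε (t * s) * s) (0 * s * s) 0 := h2D.mul_const s
    have h5 : HasDerivAt (fun t => hFa ε t * (hDa ε (t * s) * s))
        ((1 + ε) * (hDa ε ((0:ℝ) * s) * s) + hFa ε 0 * (0 * s * s)) 0 :=
      hdF0.mul h4
    have hfin := (hphiD0.add h1').add ((h3.add h5).const_mul m)
    refine hfin.congr_deriv ?_
    rw [hz, hF0, hD0]
    ring
  have hSneg : A2 + A2 * (s * s) + m * (((1 + ε) * (1 + ε)) * s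
      + ((1 + ε) * (1 + ε)) * s) < 0 := by
    have hSval : A2 + A2 * (s * s) + m * (((1 + ε) * (1 + ε)) * s
        + ((1 + ε) * (1 + ε)) * s) = 2 * A2 + 2 * (s * B) := by
      rw [hs2, hB]; ring
    rw [hSval, hsB]
    linarith
  have hnc := not_convex_of_neg_second f F' hdf _ hS hSneg
  apply hnc
  -- f is convex as V ∘ linear
  have hcomp : f = V ∘ (LinearMap.toSpanSingleton ℝ (Fin 2 → ℝ) v).toAffineMap := by
    funext t
    simp [hf, LinearMap.toSpanSingleton_apply]
  rw [hcomp]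
  have := hcv.comp_affineMap (LinearMap.toSpanSingleton ℝ (Fin 2 → ℝ) v).toAffineMap
  simpa using this
end

section
/- For the Beta distribution Π_β on (0,1) with parameters β_1, β_2 > 0 and weight w_τ(t) = t²(1−t)², the optimal weighted Poincaré constant satisfies C_P(Π_β, w_τ) ≥ 4/min(β_1², β_2²). Specifically, for h_η(t) = t^η with η > −β_1/2, the Rayleigh quotient Var_{Π_β}(h_η)/∫ w_τ (h_η')² dΠ_β tends to 4/β_1² as η → −β_1/2, and symmetrically with (1−t)^η for β_2. -/
open MeasureTheory Filter

section PoincareAux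
open Set

lemma rbeta_cplx_eq (a b : ℝ) : ∀ t ∈ Ioo (0:ℝ) 1,
    ((t:ℂ) ^ ((a:ℂ) - 1) * (1 - (t:ℂ)) ^ ((b:ℂ) - 1)) = ((t ^ (a-1) * (1-t) ^ (b-1) : ℝ) : ℂ) := by
  intro t ht
  rw [Complex.ofReal_mul, Complex.ofReal_cpow ht.1.le, Complex.ofReal_cpow (by linarith [ht.2] : (0:ℝ) ≤ 1 - t)]
  push_cast
  ring_nf

lemma rbeta_cplx_integrable {a b : ℝ} (ha : 0 < a) (hb : 0 < b) :
    IntegrableOn (fun t : ℝ => ((t ^ (a-1) * (1-t) ^ (b-1) : ℝ) : ℂ)) (Ioo 0 1) := by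
  have h := Complex.betaIntegral_convergent (u := a) (v := b) (by simpa) (by simpa)
  rw [intervalIntegrable_iff_integrableOn_Ioo_of_le zero_le_one] at h
  exact h.congr_fun (fun t ht => rbeta_cplx_eq a b t ht) measurableSet_Ioo

lemma rbeta_integrable {a b : ℝ} (ha : 0 < a) (hb : 0 < b) :
    IntegrableOn (fun t : ℝ => t ^ (a-1) * (1-t) ^ (b-1)) (Ioo 0 1) := by
  have h2 := (rbeta_cplx_integrable ha hb).re
  simp at h2; exact h2

lemma rbeta_eval {a b : ℝ} (ha : 0 < a) (hb : 0 < b) :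
    ∫ t in Ioo (0:ℝ) 1, t ^ (a-1) * (1-t) ^ (b-1) =
      Real.Gamma a * Real.Gamma b / Real.Gamma (a+b) := by
  have key := Complex.Gamma_mul_Gamma_eq_betaIntegral (s := a) (t := b) (by simpa) (by simpa)
  have hI : Complex.betaIntegral a b = ((∫ t in Ioo (0:ℝ) 1, t ^ (a-1) * (1-t) ^ (b-1) : ℝ) : ℂ) := by
    rw [Complex.betaIntegral, intervalIntegral.integral_of_le zero_le_one,
      integral_Ioc_eq_integral_Ioo,
      setIntegral_congr_fun measurableSet_Ioo (rbeta_cplx_eq a b)]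
    have cc : ∀ r : ℝ, Complex.ofReal r = @RCLike.ofReal ℂ _ r := fun r => rfl
    conv_lhs => enter [2, x]; rw [cc]
    rw [_root_.integral_ofReal, ← cc]
  rw [hI, show ((a:ℂ) + b) = ((a + b : ℝ) : ℂ) by push_cast; ring,
    Complex.Gamma_ofReal, Complex.Gamma_ofReal, Complex.Gamma_ofReal] at key
  have hg : Real.Gamma (a+b) ≠ 0 := (Real.Gamma_pos_of_pos (by linarith)).ne'
  have key2 : Real.Gamma a * Real.Gamma b =
      Real.Gamma (a+b) * ∫ t in Ioo (0:ℝ) 1, t ^ (a-1) * (1-t) ^ (b-1) := by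
    exact_mod_cast key
  field_simp
  linarith [key2]

lemma Bmoment {β₁ β₂ cB : ℝ} (hβ₁ : 0 < β₁) (hβ₂ : 0 < β₂) (hcB : 0 < cB)
    {B : Measure ℝ} (hB : B = volume.withDensity fun t => ENNReal.ofReal
      (Set.indicator (Set.Ioo (0:ℝ) 1) (fun t => cB⁻¹ * t ^ (β₁-1) * (1-t) ^ (β₂-1)) t))
    {a b c : ℝ} (ha : -β₁ < a) (hb : -β₂ < b) {g : ℝ → ℝ}
    (hg : ∀ t ∈ Set.Ioo (0:ℝ) 1, g t = c * (t ^ a * (1-t) ^ b)) :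
    Integrable g B ∧
    ∫ t, g t ∂B = c * cB⁻¹ *
      (Real.Gamma (β₁+a) * Real.Gamma (β₂+b) / Real.Gamma (β₁+a+(β₂+b))) := by
  set d : ℝ → ℝ := Set.indicator (Set.Ioo (0:ℝ) 1)
    (fun t => cB⁻¹ * t ^ (β₁-1) * (1-t) ^ (β₂-1)) with hd
  have hd0 : ∀ t, 0 ≤ d t := by
    intro t
    apply Set.indicator_nonneg
    intro x hx
    have : (0:ℝ) ≤ x ^ (β₁-1) := Real.rpow_nonneg hx.1.le _
    have h2 : (0:ℝ) ≤ (1-x) ^ (β₂-1) := Real.rpow_nonneg (by linarith [hx.2]) _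
    positivity
  have hdmeas : Measurable d := by
    apply Measurable.indicator _ measurableSet_Ioo
    fun_prop
  -- the key pointwise rewriting
  have hkey : ∀ t, g t * (ENNReal.ofReal (d t)).toReal =
      Set.indicator (Set.Ioo (0:ℝ) 1)
        (fun t => (c * cB⁻¹) * (t ^ ((β₁+a)-1) * (1-t) ^ ((β₂+b)-1))) t := by
    intro t
    rw [ENNReal.toReal_ofReal (hd0 t)]
    by_cases ht : t ∈ Set.Ioo (0:ℝ) 1
    · rw [Set.indicator_of_mem ht, hd, Set.indicator_of_mem ht, hg t ht]
      have e1 : t ^ ((β₁+a)-1) = t ^ (β₁-1) * t ^ a := by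
        rw [← Real.rpow_add ht.1]; ring_nf
      have e2 : (1-t) ^ ((β₂+b)-1) = (1-t) ^ (β₂-1) * (1-t) ^ b := by
        rw [← Real.rpow_add (by linarith [ht.2] : (0:ℝ) < 1 - t)]; ring_nf
      rw [e1, e2]; ring
    · rw [Set.indicator_of_notMem ht, hd, Set.indicator_of_notMem ht, mul_zero]
  have hInt : IntegrableOn (fun t : ℝ => (c * cB⁻¹) * (t ^ ((β₁+a)-1) * (1-t) ^ ((β₂+b)-1)))
      (Set.Ioo 0 1) := (rbeta_integrable (by linarith) (by linarith)).const_mul _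
  constructor
  · rw [hB, integrable_withDensity_iff (by fun_prop) (Eventually.of_forall fun x => ENNReal.ofReal_lt_top)]
    have : (fun t => g t * (ENNReal.ofReal (d t)).toReal) =
        Set.indicator (Set.Ioo (0:ℝ) 1)
          (fun t => (c * cB⁻¹) * (t ^ ((β₁+a)-1) * (1-t) ^ ((β₂+b)-1))) := funext hkey
    rw [this, integrable_indicator_iff measurableSet_Ioo]
    exact hInt
  · rw [hB]
    have hrw : (fun t => ENNReal.ofReal (d t)) = fun t => ((Real.toNNReal (d t) : NNReal) : ENNReal) := rfl
    rw [hrw, integral_withDensity_eq_integral_smul (by fun_prop) g]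
    have : (fun t => (Real.toNNReal (d t)) • g t) =
        Set.indicator (Set.Ioo (0:ℝ) 1)
          (fun t => (c * cB⁻¹) * (t ^ ((β₁+a)-1) * (1-t) ^ ((β₂+b)-1))) := by
      funext t
      rw [← hkey t, ENNReal.toReal_ofReal (hd0 t), NNReal.smul_def, smul_eq_mul,
        Real.coe_toNNReal _ (hd0 t)]
      ring
    rw [this, integral_indicator measurableSet_Ioo, integral_const_mul,
      rbeta_eval (by linarith) (by linarith)]

lemma contGamma {x : ℝ} (hx : 0 < x) : ContinuousAt Real.Gamma x :=
  (Real.differentiableAt_Gamma fun m =>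
    ((lt_of_le_of_lt (neg_nonpos.mpr (Nat.cast_nonneg m)) hx).ne')).continuousAt

lemma gammaInv_tendsto : Tendsto (fun x : ℝ => (Real.Gamma x)⁻¹) (nhdsWithin 0 (Set.Ioi 0)) (nhds 0) := by
  have h1 : Tendsto (fun x : ℝ => x / Real.Gamma (x+1)) (nhdsWithin 0 (Set.Ioi 0)) (nhds 0) := by
    have hc : ContinuousAt (fun x : ℝ => x / Real.Gamma (x+1)) 0 := by
      apply ContinuousAt.div continuousAt_id
      · have : ContinuousAt (fun x : ℝ => x + 1) 0 := (continuous_id.add continuous_const).continuousAt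
        have h2 := ContinuousAt.comp (x := (0:ℝ)) (g := Real.Gamma)
          (by norm_num; exact contGamma one_pos) this
        exact h2
      · simp [Real.Gamma_one]
    have := hc.continuousWithinAt (s := Set.Ioi (0:ℝ))
    simpa [ContinuousWithinAt, Real.Gamma_one] using this
  apply h1.congr'
  filter_upwards [self_mem_nhdsWithin] with x hx
  have hx0 : (0:ℝ) < x := hx
  have hg : Real.Gamma x ≠ 0 := (Real.Gamma_pos_of_pos hx0).ne'
  rw [Real.Gamma_add_one hx0.ne']
  field_simp

lemma tendstoGamma {g : ℝ → ℝ} {x v : ℝ} (hv : 0 < v)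
    (hg : Tendsto g (nhds x) (nhds v)) :
    Tendsto (fun η => Real.Gamma (g η)) (nhds x) (nhds (Real.Gamma v)) :=
  (contGamma hv).tendsto.comp hg

lemma limitQ (b₁ b₂ c : ℝ) (h₁ : 0 < b₁) (h₂ : 0 < b₂) (hc : 0 < c) :
    Tendsto (fun η => (c * (Real.Gamma (b₁+2*η) * Real.Gamma b₂ / Real.Gamma (b₁+2*η+b₂)) -
        (c * (Real.Gamma (b₁+η) * Real.Gamma b₂ / Real.Gamma (b₁+η+b₂)))^2) /
      (η^2 * c * (Real.Gamma (b₁+2*η) * Real.Gamma (b₂+2) / Real.Gamma (b₁+2*η+(b₂+2)))))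
      (nhdsWithin (-b₁/2) (Set.Ioi (-b₁/2))) (nhds (4/b₁^2)) := by
  set x₀ : ℝ := -b₁/2 with hx₀
  set F' : ℝ → ℝ := fun η =>
    Real.Gamma b₂ * Real.Gamma (b₁+2*η+(b₂+2)) /
      (η^2 * Real.Gamma (b₁+2*η+b₂) * Real.Gamma (b₂+2))
    - c * (Real.Gamma (b₁+η) * Real.Gamma b₂ / Real.Gamma (b₁+η+b₂))^2 *
        Real.Gamma (b₁+2*η+(b₂+2)) * (Real.Gamma (b₁+2*η))⁻¹ /
      (η^2 * Real.Gamma (b₂+2)) with hF'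
  have hmem : Set.Ioo x₀ (-b₁/4) ∈ nhdsWithin x₀ (Set.Ioi x₀) :=
    Ioo_mem_nhdsGT_of_mem ⟨le_refl _, by rw [hx₀]; linarith⟩
  -- tendsto of F'
  have hTF' : Tendsto F' (nhdsWithin x₀ (Set.Ioi x₀)) (nhds (4/b₁^2)) := by
    have hin : ∀ p q : ℝ, Tendsto (fun η : ℝ => p + q*η) (nhds x₀) (nhds (p + q*x₀)) :=
      fun p q => (continuous_const.add (continuous_const.mul continuous_id)).tendsto _
    have c1 : Tendsto (fun η : ℝ => Real.Gamma (b₁+2*η+b₂)) (nhds x₀) (nhds (Real.Gamma b₂)) := by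
      have h := tendstoGamma (g := fun η => (b₁+b₂) + 2*η) (x := x₀) (v := b₂) h₂
        (by have := hin (b₁+b₂) 2; rw [show (b₁+b₂)+2*x₀ = b₂ by rw [hx₀]; ring] at this; exact this)
      exact h.congr (fun η => by ring_nf)
    have c2 : Tendsto (fun η : ℝ => Real.Gamma (b₁+2*η+(b₂+2))) (nhds x₀) (nhds (Real.Gamma (b₂+2))) := by
      have h := tendstoGamma (g := fun η => (b₁+b₂+2) + 2*η) (x := x₀) (v := b₂+2) (by linarith)
        (by have := hin (b₁+b₂+2) 2; rw [show (b₁+b₂+2)+2*x₀ = b₂+2 by rw [hx₀]; ring] at this; exact this)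
      exact h.congr (fun η => by ring_nf)
    have c3 : Tendsto (fun η : ℝ => Real.Gamma (b₁+η)) (nhds x₀) (nhds (Real.Gamma (b₁/2))) := by
      have h := tendstoGamma (g := fun η => b₁ + 1*η) (x := x₀) (v := b₁/2) (by linarith)
        (by have := hin b₁ 1; rw [show b₁+1*x₀ = b₁/2 by rw [hx₀]; ring] at this; exact this)
      exact h.congr (fun η => by ring_nf)
    have c4 : Tendsto (fun η : ℝ => Real.Gamma (b₁+η+b₂)) (nhds x₀) (nhds (Real.Gamma (b₁/2+b₂))) := by
      have h := tendstoGamma (g := fun η => (b₁+b₂) + 1*η) (x := x₀) (v := b₁/2+b₂) (by linarith)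
        (by have := hin (b₁+b₂) 1; rw [show (b₁+b₂)+1*x₀ = b₁/2+b₂ by rw [hx₀]; ring] at this; exact this)
      exact h.congr (fun η => by ring_nf)
    have c5 : Tendsto (fun η : ℝ => η^2) (nhds x₀) (nhds (x₀^2)) :=
      (continuous_pow 2).tendsto _
    have c6 : Tendsto (fun η : ℝ => (Real.Gamma (b₁+2*η))⁻¹) (nhdsWithin x₀ (Set.Ioi x₀)) (nhds 0) := by
      apply gammaInv_tendsto.comp
      rw [tendsto_nhdsWithin_iff]
      constructor
      · have := hin b₁ 2
        rw [show b₁+2*x₀ = 0 by rw [hx₀]; ring] at this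
        exact this.mono_left nhdsWithin_le_nhds
      · filter_upwards [self_mem_nhdsWithin] with η hη
        have : x₀ < η := hη
        simp only [Set.mem_Ioi]
        rw [hx₀] at this; linarith
    have hx₀2 : (0:ℝ) < x₀^2 := by rw [hx₀, show ((-b₁/2)^2:ℝ) = b₁^2/4 by ring]; positivity
    have hT : (0:ℝ) < Real.Gamma b₂ := Real.Gamma_pos_of_pos h₂
    have hS : (0:ℝ) < Real.Gamma (b₂+2) := Real.Gamma_pos_of_pos (by linarith)
    have term1 : Tendsto (fun η : ℝ => Real.Gamma b₂ * Real.Gamma (b₁+2*η+(b₂+2)) /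
        (η^2 * Real.Gamma (b₁+2*η+b₂) * Real.Gamma (b₂+2)))
        (nhds x₀) (nhds (Real.Gamma b₂ * Real.Gamma (b₂+2) / (x₀^2 * Real.Gamma b₂ * Real.Gamma (b₂+2)))) := by
      exact ((tendsto_const_nhds.mul c2).div ((c5.mul c1).mul tendsto_const_nhds)
        (mul_pos (mul_pos hx₀2 hT) hS).ne')
    have term2 : Tendsto (fun η : ℝ => c * (Real.Gamma (b₁+η) * Real.Gamma b₂ / Real.Gamma (b₁+η+b₂))^2 *
        Real.Gamma (b₁+2*η+(b₂+2)) * (Real.Gamma (b₁+2*η))⁻¹ / (η^2 * Real.Gamma (b₂+2)))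
        (nhdsWithin x₀ (Set.Ioi x₀)) (nhds 0) := by
      have g2 : Tendsto (fun η : ℝ => c * (Real.Gamma (b₁+η) * Real.Gamma b₂ / Real.Gamma (b₁+η+b₂))^2 *
          Real.Gamma (b₁+2*η+(b₂+2))) (nhds x₀)
          (nhds (c * (Real.Gamma (b₁/2) * Real.Gamma b₂ / Real.Gamma (b₁/2+b₂))^2 * Real.Gamma (b₂+2))) := by
        apply Tendsto.mul _ c2
        apply Tendsto.mul tendsto_const_nhds
        exact Tendsto.pow ((c3.mul tendsto_const_nhds).div c4
          (Real.Gamma_pos_of_pos (by linarith)).ne') 2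
      have hnum : Tendsto (fun η : ℝ => c * (Real.Gamma (b₁+η) * Real.Gamma b₂ / Real.Gamma (b₁+η+b₂))^2 *
          Real.Gamma (b₁+2*η+(b₂+2)) * (Real.Gamma (b₁+2*η))⁻¹)
          (nhdsWithin x₀ (Set.Ioi x₀)) (nhds 0) := by
        have h := (g2.mono_left (nhdsWithin_le_nhds (s := Set.Ioi x₀))).mul c6
        simpa using h
      have hden : Tendsto (fun η : ℝ => η^2 * Real.Gamma (b₂+2)) (nhdsWithin x₀ (Set.Ioi x₀))
          (nhds (x₀^2 * Real.Gamma (b₂+2))) :=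
        (c5.mul tendsto_const_nhds).mono_left nhdsWithin_le_nhds
      have h := hnum.div hden (mul_pos hx₀2 hS).ne'
      rw [zero_div] at h
      exact h
    have hval : Real.Gamma b₂ * Real.Gamma (b₂+2) / (x₀^2 * Real.Gamma b₂ * Real.Gamma (b₂+2)) - 0
        = 4/b₁^2 := by
      rw [sub_zero, hx₀]
      rw [show (-b₁/2)^2 = b₁^2/4 by ring]
      field_simp
    have := ((term1.mono_left nhdsWithin_le_nhds).sub term2)
    rw [hval] at this
    exact this
  -- eventual equality
  apply hTF'.congr'
  filter_upwards [hmem] with η hη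
  have hη1 : x₀ < η := hη.1
  have hη2 : η < -b₁/4 := hη.2
  have hb2η : 0 < b₁ + 2*η := by rw [hx₀] at hη1; linarith
  have hbη : 0 < b₁ + η := by rw [hx₀] at hη1; linarith
  have hη0 : η ≠ 0 := by intro h; rw [h] at hη2; linarith
  have hX : Real.Gamma (b₁+2*η) ≠ 0 := (Real.Gamma_pos_of_pos hb2η).ne'
  have hP : Real.Gamma (b₁+2*η+b₂) ≠ 0 := (Real.Gamma_pos_of_pos (by linarith)).ne'
  have hR : Real.Gamma (b₁+2*η+(b₂+2)) ≠ 0 := (Real.Gamma_pos_of_pos (by linarith)).ne'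
  have hS : Real.Gamma (b₂+2) ≠ 0 := (Real.Gamma_pos_of_pos (by linarith)).ne'
  have hT : Real.Gamma b₂ ≠ 0 := (Real.Gamma_pos_of_pos h₂).ne'
  have hQ4 : Real.Gamma (b₁+η+b₂) ≠ 0 := (Real.Gamma_pos_of_pos (by linarith)).ne'
  rw [hF']
  field_simp

lemma pw_nat {s : ℝ} : s^(2:ℕ) = s^(2:ℝ) := by
  rw [← Real.rpow_natCast s 2]; norm_num

lemma pw_sq {s : ℝ} (hs : 0 ≤ s) (η : ℝ) : (s^η)^(2:ℕ) = s^(2*η) := by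
  rw [← Real.rpow_natCast (s^η) 2, ← Real.rpow_mul hs]
  congr 1; push_cast; ring

lemma pw_aux {s : ℝ} (hs : 0 < s) (η : ℝ) : s^(2:ℕ) * (s^(η-1))^(2:ℕ) = s^(2*η) := by
  rw [pw_nat, ← Real.rpow_natCast (s^(η-1)) 2, ← Real.rpow_mul hs.le, ← Real.rpow_add hs]
  congr 1; push_cast; ring


end PoincareAux

/-- For the Beta distribution `Π_β` on `(0,1)` with parameters `β₁, β₂ > 0` and weight
`w_τ(t) = t²(1−t)²`, every constant `C` for which the weighted Poincaré inequality holds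
satisfies `C ≥ 4/min(β₁², β₂²)`; moreover the Rayleigh quotient of `h_η(t) = t^η` tends to
`4/β₁²` as `η → −β₁/2⁺`, and symmetrically the one of `t ↦ (1−t)^η` tends to `4/β₂²`. -/
theorem stmt_18 (β₁ β₂ : ℝ) (hβ₁ : 0 < β₁) (hβ₂ : 0 < β₂) (cB : ℝ) (hcB : 0 < cB)
    (B : Measure ℝ)
    (hB : B = volume.withDensity fun t => ENNReal.ofReal
      (Set.indicator (Set.Ioo (0 : ℝ) 1)
        (fun t => cB⁻¹ * t ^ (β₁ - 1) * (1 - t) ^ (β₂ - 1)) t))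
    (hBprob : IsProbabilityMeasure B)
    (wτ : ℝ → ℝ) (hwτ : wτ = fun t => t ^ 2 * (1 - t) ^ 2)
    -- the Rayleigh quotients of t ↦ t^η and t ↦ (1-t)^η
    (Q₁ Q₂ : ℝ → ℝ)
    (hQ₁ : Q₁ = fun η =>
      ((∫ t, t ^ (2 * η) ∂B) - (∫ t, t ^ η ∂B) ^ 2) /
        ∫ t, wτ t * (η * t ^ (η - 1)) ^ 2 ∂B)
    (hQ₂ : Q₂ = fun η =>
      ((∫ t, (1 - t) ^ (2 * η) ∂B) - (∫ t, (1 - t) ^ η ∂B) ^ 2) /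
        ∫ t, wτ t * (η * (1 - t) ^ (η - 1)) ^ 2 ∂B) :
    (∀ C : ℝ,
      (∀ f f' : ℝ → ℝ, (∀ t ∈ Set.Ioo (0 : ℝ) 1, HasDerivAt f (f' t) t) →
        Integrable f B → Integrable (fun t => f t ^ 2) B →
        Integrable (fun t => wτ t * f' t ^ 2) B →
        (0 < ∫ t, wτ t * f' t ^ 2 ∂B) →
        ∫ t, f t ^ 2 ∂B - (∫ t, f t ∂B) ^ 2 ≤ C * ∫ t, wτ t * f' t ^ 2 ∂B) →
      4 / min (β₁ ^ 2) (β₂ ^ 2) ≤ C) ∧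
    Tendsto Q₁ (nhdsWithin (-β₁ / 2) (Set.Ioi (-β₁ / 2))) (nhds (4 / β₁ ^ 2)) ∧
    Tendsto Q₂ (nhdsWithin (-β₂ / 2) (Set.Ioi (-β₂ / 2))) (nhds (4 / β₂ ^ 2)) := by
  subst hwτ hQ₁ hQ₂
  -- moment computations, side 1
  have mom1 : ∀ η : ℝ, -β₁/2 < η → η < -β₁/4 →
      (Integrable (fun t : ℝ => t ^ η) B ∧
        ∫ t, t ^ η ∂B = 1 * cB⁻¹ *
          (Real.Gamma (β₁+η) * Real.Gamma (β₂+0) / Real.Gamma (β₁+η+(β₂+0)))) ∧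
      (Integrable (fun t : ℝ => t ^ (2*η)) B ∧
        ∫ t, t ^ (2*η) ∂B = 1 * cB⁻¹ *
          (Real.Gamma (β₁+2*η) * Real.Gamma (β₂+0) / Real.Gamma (β₁+2*η+(β₂+0)))) ∧
      (Integrable (fun t : ℝ => (t ^ η) ^ 2) B ∧
        ∫ t, (t ^ η) ^ 2 ∂B = 1 * cB⁻¹ *
          (Real.Gamma (β₁+2*η) * Real.Gamma (β₂+0) / Real.Gamma (β₁+2*η+(β₂+0)))) ∧
      (Integrable (fun t : ℝ => (fun t : ℝ => t ^ 2 * (1-t) ^ 2) t * (η * t ^ (η-1)) ^ 2) B ∧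
        ∫ t, (fun t : ℝ => t ^ 2 * (1-t) ^ 2) t * (η * t ^ (η-1)) ^ 2 ∂B = η^2 * cB⁻¹ *
          (Real.Gamma (β₁+2*η) * Real.Gamma (β₂+2) / Real.Gamma (β₁+2*η+(β₂+2)))) := by
    intro η hη1 hη2
    have ha2 : -β₁ < 2*η := by linarith
    have haη : -β₁ < η := by linarith
    have hb0 : -β₂ < 0 := by linarith
    have hb2 : -β₂ < 2 := by linarith
    refine ⟨Bmoment hβ₁ hβ₂ hcB hB (c := 1) haη hb0 (g := fun t => t^η)
        (fun t ht => by rw [Real.rpow_zero]; ring),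
      Bmoment hβ₁ hβ₂ hcB hB (c := 1) ha2 hb0 (g := fun t => t^(2*η))
        (fun t ht => by rw [Real.rpow_zero]; ring),
      Bmoment hβ₁ hβ₂ hcB hB (c := 1) ha2 hb0 (g := fun t => (t^η)^(2:ℕ))
        (fun t ht => by
          show (t^η)^(2:ℕ) = 1 * (t^(2*η) * (1-t)^(0:ℝ))
          rw [Real.rpow_zero, pw_sq ht.1.le]; ring),
      Bmoment hβ₁ hβ₂ hcB hB (c := η^2) ha2 hb2
        (g := fun t => (fun t : ℝ => t ^ 2 * (1-t) ^ 2) t * (η * t ^ (η-1)) ^ 2)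
        (fun t ht => by
          have h := pw_aux ht.1 η
          show (t^(2:ℕ)*(1-t)^(2:ℕ)) * (η * t^(η-1))^(2:ℕ) = η^2 * (t^(2*η) * (1-t)^(2:ℝ))
          calc (t^(2:ℕ)*(1-t)^(2:ℕ)) * (η * t^(η-1))^(2:ℕ)
              = (t^(2:ℕ) * (t^(η-1))^(2:ℕ)) * (1-t)^(2:ℕ) * η^2 := by ring
            _ = η^2 * (t^(2*η) * (1-t)^(2:ℝ)) := by rw [h, pw_nat]; ring)⟩
  -- moment computations, side 2
  have mom2 : ∀ η : ℝ, -β₂/2 < η → η < -β₂/4 →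
      (Integrable (fun t : ℝ => (1-t) ^ η) B ∧
        ∫ t, (1-t) ^ η ∂B = 1 * cB⁻¹ *
          (Real.Gamma (β₁+0) * Real.Gamma (β₂+η) / Real.Gamma (β₁+0+(β₂+η)))) ∧
      (Integrable (fun t : ℝ => (1-t) ^ (2*η)) B ∧
        ∫ t, (1-t) ^ (2*η) ∂B = 1 * cB⁻¹ *
          (Real.Gamma (β₁+0) * Real.Gamma (β₂+2*η) / Real.Gamma (β₁+0+(β₂+2*η)))) ∧
      (Integrable (fun t : ℝ => ((1-t) ^ η) ^ 2) B ∧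
        ∫ t, ((1-t) ^ η) ^ 2 ∂B = 1 * cB⁻¹ *
          (Real.Gamma (β₁+0) * Real.Gamma (β₂+2*η) / Real.Gamma (β₁+0+(β₂+2*η)))) ∧
      (Integrable (fun t : ℝ => (fun t : ℝ => t ^ 2 * (1-t) ^ 2) t * (η * (1-t) ^ (η-1)) ^ 2) B ∧
        ∫ t, (fun t : ℝ => t ^ 2 * (1-t) ^ 2) t * (η * (1-t) ^ (η-1)) ^ 2 ∂B = η^2 * cB⁻¹ *
          (Real.Gamma (β₁+2) * Real.Gamma (β₂+2*η) / Real.Gamma (β₁+2+(β₂+2*η)))) ∧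
      (Integrable (fun t : ℝ => (fun t : ℝ => t ^ 2 * (1-t) ^ 2) t * (η * (1-t) ^ (η-1) * (-1)) ^ 2) B ∧
        ∫ t, (fun t : ℝ => t ^ 2 * (1-t) ^ 2) t * (η * (1-t) ^ (η-1) * (-1)) ^ 2 ∂B = η^2 * cB⁻¹ *
          (Real.Gamma (β₁+2) * Real.Gamma (β₂+2*η) / Real.Gamma (β₁+2+(β₂+2*η)))) := by
    intro η hη1 hη2
    have ha2 : -β₂ < 2*η := by linarith
    have haη : -β₂ < η := by linarith
    have hb0 : -β₁ < 0 := by linarith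
    have hb2 : -β₁ < 2 := by linarith
    refine ⟨Bmoment hβ₁ hβ₂ hcB hB (c := 1) hb0 haη (g := fun t => (1-t)^η)
        (fun t ht => by rw [Real.rpow_zero]; ring),
      Bmoment hβ₁ hβ₂ hcB hB (c := 1) hb0 ha2 (g := fun t => (1-t)^(2*η))
        (fun t ht => by rw [Real.rpow_zero]; ring),
      Bmoment hβ₁ hβ₂ hcB hB (c := 1) hb0 ha2 (g := fun t => ((1-t)^η)^(2:ℕ))
        (fun t ht => by
          show ((1-t)^η)^(2:ℕ) = 1 * (t^(0:ℝ) * (1-t)^(2*η))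
          rw [Real.rpow_zero, pw_sq (by linarith [ht.2] : (0:ℝ) ≤ 1-t)]; ring),
      Bmoment hβ₁ hβ₂ hcB hB (c := η^2) hb2 ha2
        (g := fun t => (fun t : ℝ => t ^ 2 * (1-t) ^ 2) t * (η * (1-t) ^ (η-1)) ^ 2)
        (fun t ht => by
          have h := pw_aux (by linarith [ht.2] : (0:ℝ) < 1-t) η
          show (t^(2:ℕ)*(1-t)^(2:ℕ)) * (η * (1-t)^(η-1))^(2:ℕ) = η^2 * (t^(2:ℝ) * (1-t)^(2*η))
          calc (t^(2:ℕ)*(1-t)^(2:ℕ)) * (η * (1-t)^(η-1))^(2:ℕ)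
              = ((1-t)^(2:ℕ) * ((1-t)^(η-1))^(2:ℕ)) * t^(2:ℕ) * η^2 := by ring
            _ = η^2 * (t^(2:ℝ) * (1-t)^(2*η)) := by rw [h, pw_nat]; ring),
      Bmoment hβ₁ hβ₂ hcB hB (c := η^2) hb2 ha2
        (g := fun t => (fun t : ℝ => t ^ 2 * (1-t) ^ 2) t * (η * (1-t) ^ (η-1) * (-1)) ^ 2)
        (fun t ht => by
          have h := pw_aux (by linarith [ht.2] : (0:ℝ) < 1-t) η
          show (t^(2:ℕ)*(1-t)^(2:ℕ)) * (η * (1-t)^(η-1) * (-1))^(2:ℕ) = η^2 * (t^(2:ℝ) * (1-t)^(2*η))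
          calc (t^(2:ℕ)*(1-t)^(2:ℕ)) * (η * (1-t)^(η-1) * (-1))^(2:ℕ)
              = ((1-t)^(2:ℕ) * ((1-t)^(η-1))^(2:ℕ)) * t^(2:ℕ) * η^2 := by ring
            _ = η^2 * (t^(2:ℝ) * (1-t)^(2*η)) := by rw [h, pw_nat]; ring)⟩
  have hmem1 : Set.Ioo (-β₁/2) (-β₁/4) ∈ nhdsWithin (-β₁/2) (Set.Ioi (-β₁/2)) :=
    Ioo_mem_nhdsGT_of_mem ⟨le_refl _, by linarith⟩
  have hmem2 : Set.Ioo (-β₂/2) (-β₂/4) ∈ nhdsWithin (-β₂/2) (Set.Ioi (-β₂/2)) :=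
    Ioo_mem_nhdsGT_of_mem ⟨le_refl _, by linarith⟩
  -- Gamma positivity shortcuts
  have hΓ : ∀ x : ℝ, 0 < x → 0 < Real.Gamma x := fun x hx => Real.Gamma_pos_of_pos hx
  -- Tendsto for Q₁
  have T1 : Tendsto (fun η : ℝ =>
      ((∫ t, t ^ (2 * η) ∂B) - (∫ t, t ^ η ∂B) ^ 2) /
        ∫ t, (fun t : ℝ => t ^ 2 * (1 - t) ^ 2) t * (η * t ^ (η - 1)) ^ 2 ∂B)
      (nhdsWithin (-β₁ / 2) (Set.Ioi (-β₁ / 2))) (nhds (4 / β₁ ^ 2)) := by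
    apply Tendsto.congr' _ (limitQ β₁ β₂ cB⁻¹ hβ₁ hβ₂ (inv_pos.mpr hcB))
    filter_upwards [hmem1] with η hη
    obtain ⟨⟨_, e1⟩, ⟨_, e2⟩, _, ⟨_, e4⟩⟩ := mom1 η hη.1 hη.2
    simp only [e1, e2, e4]
    norm_num
  -- Tendsto for Q₂
  have T2 : Tendsto (fun η : ℝ =>
      ((∫ t, (1 - t) ^ (2 * η) ∂B) - (∫ t, (1 - t) ^ η ∂B) ^ 2) /
        ∫ t, (fun t : ℝ => t ^ 2 * (1 - t) ^ 2) t * (η * (1 - t) ^ (η - 1)) ^ 2 ∂B)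
      (nhdsWithin (-β₂ / 2) (Set.Ioi (-β₂ / 2))) (nhds (4 / β₂ ^ 2)) := by
    apply Tendsto.congr' _ (limitQ β₂ β₁ cB⁻¹ hβ₂ hβ₁ (inv_pos.mpr hcB))
    filter_upwards [hmem2] with η hη
    obtain ⟨⟨_, e1⟩, ⟨_, e2⟩, _, ⟨_, e4⟩, _⟩ := mom2 η hη.1 hη.2
    simp only [e1, e2, e4]
    norm_num
    ring_nf
  refine ⟨?_, T1, T2⟩
  intro C hC
  have hb1 : 4 / β₁ ^ 2 ≤ C := by
    refine le_of_tendsto T1 ?_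
    filter_upwards [hmem1] with η hη
    obtain ⟨hη1, hη2⟩ := hη
    obtain ⟨⟨i1, e1⟩, ⟨i2, e2⟩, ⟨i3, e3⟩, ⟨i4, e4⟩⟩ := mom1 η hη1 hη2
    have hηneg : η < 0 := by linarith
    have hsq : 0 < η^2 := by nlinarith
    have hDpos : 0 < ∫ t, (fun t : ℝ => t ^ 2 * (1 - t) ^ 2) t * (η * t ^ (η - 1)) ^ 2 ∂B := by
      rw [e4]
      exact mul_pos (mul_pos hsq (inv_pos.mpr hcB))
        (div_pos (mul_pos (hΓ _ (by linarith)) (hΓ _ (by linarith)))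
          (hΓ _ (by linarith)))
    have hder : ∀ t ∈ Set.Ioo (0:ℝ) 1, HasDerivAt (fun t : ℝ => t ^ η)
        ((fun t : ℝ => η * t ^ (η-1)) t) t :=
      fun t ht => Real.hasDerivAt_rpow_const (Or.inl ht.1.ne')
    have hVar := hC (fun t : ℝ => t ^ η) (fun t : ℝ => η * t ^ (η-1)) hder i1 i3 i4 hDpos
    have hVar' : (∫ t, (t ^ η) ^ 2 ∂B) - (∫ t, t ^ η ∂B) ^ 2 ≤
        C * ∫ t, (fun t : ℝ => t ^ 2 * (1 - t) ^ 2) t * (η * t ^ (η - 1)) ^ 2 ∂B := hVar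
    show ((∫ t, t ^ (2 * η) ∂B) - (∫ t, t ^ η ∂B) ^ 2) /
        ∫ t, (fun t : ℝ => t ^ 2 * (1 - t) ^ 2) t * (η * t ^ (η - 1)) ^ 2 ∂B ≤ C
    rw [div_le_iff₀ hDpos]
    have heq : ∫ t, t ^ (2*η) ∂B = ∫ t, (t ^ η) ^ 2 ∂B := by rw [e2, e3]
    rw [heq]
    exact hVar'
  have hb2 : 4 / β₂ ^ 2 ≤ C := by
    refine le_of_tendsto T2 ?_
    filter_upwards [hmem2] with η hη
    obtain ⟨hη1, hη2⟩ := hη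
    obtain ⟨⟨i1, e1⟩, ⟨i2, e2⟩, ⟨i3, e3⟩, ⟨i4, e4⟩, ⟨i5, e5⟩⟩ := mom2 η hη1 hη2
    have hηneg : η < 0 := by linarith
    have hsq : 0 < η^2 := by nlinarith
    have hDpos5 : 0 < ∫ t, (fun t : ℝ => t ^ 2 * (1 - t) ^ 2) t * (η * (1 - t) ^ (η - 1) * (-1)) ^ 2 ∂B := by
      rw [e5]
      exact mul_pos (mul_pos hsq (inv_pos.mpr hcB))
        (div_pos (mul_pos (hΓ _ (by linarith)) (hΓ _ (by linarith)))
          (hΓ _ (by linarith)))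
    have hDpos4 : 0 < ∫ t, (fun t : ℝ => t ^ 2 * (1 - t) ^ 2) t * (η * (1 - t) ^ (η - 1)) ^ 2 ∂B := by
      rw [e4]
      exact mul_pos (mul_pos hsq (inv_pos.mpr hcB))
        (div_pos (mul_pos (hΓ _ (by linarith)) (hΓ _ (by linarith)))
          (hΓ _ (by linarith)))
    have hder : ∀ t ∈ Set.Ioo (0:ℝ) 1, HasDerivAt (fun t : ℝ => (1-t) ^ η)
        ((fun t : ℝ => η * (1-t) ^ (η-1) * (-1)) t) t := by
      intro t ht
      have h1 : HasDerivAt (fun t : ℝ => 1 - t) (-1) t := by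
        simpa using (hasDerivAt_id t).const_sub 1
      have h2 := h1.rpow_const (p := η) (Or.inl (by intro h; nlinarith [ht.2] : (1:ℝ) - t ≠ 0))
      convert h2 using 1
      ring
    have hVar := hC (fun t : ℝ => (1-t) ^ η) (fun t : ℝ => η * (1-t) ^ (η-1) * (-1)) hder i1 i3 i5 hDpos5
    have hVar' : (∫ t, ((1-t) ^ η) ^ 2 ∂B) - (∫ t, (1-t) ^ η ∂B) ^ 2 ≤
        C * ∫ t, (fun t : ℝ => t ^ 2 * (1 - t) ^ 2) t * (η * (1 - t) ^ (η - 1) * (-1)) ^ 2 ∂B := hVar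
    show ((∫ t, (1 - t) ^ (2 * η) ∂B) - (∫ t, (1 - t) ^ η ∂B) ^ 2) /
        ∫ t, (fun t : ℝ => t ^ 2 * (1 - t) ^ 2) t * (η * (1 - t) ^ (η - 1)) ^ 2 ∂B ≤ C
    rw [div_le_iff₀ hDpos4]
    have heq : ∫ t, (1-t) ^ (2*η) ∂B = ∫ t, ((1-t) ^ η) ^ 2 ∂B := by rw [e2, e3]
    have heqD : ∫ t, (fun t : ℝ => t ^ 2 * (1 - t) ^ 2) t * (η * (1 - t) ^ (η - 1)) ^ 2 ∂B =
        ∫ t, (fun t : ℝ => t ^ 2 * (1 - t) ^ 2) t * (η * (1 - t) ^ (η - 1) * (-1)) ^ 2 ∂B := by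
      rw [e4, e5]
    rw [heq, heqD]
    exact hVar'
  rcases le_total (β₁ ^ 2) (β₂ ^ 2) with h | h
  · rw [min_eq_left h]; exact hb1
  · rw [min_eq_right h]; exact hb2
end
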